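/- Let $\Theta = \mathbb{R}^d$, let $\lambda > 0$, let $(A_t, y_t)_{t=1}^n$ be arbitrary with $A_t \in \mathbb{R}^d$, $y_t \in \mathbb{R}$. Define $\ell_t(\theta) = \frac{1}{2}(A_t^\top \theta - y_t)^2$, $V_t = \lambda I + \sum_{s=1}^{t} A_s A_s^\top$, and let $\hat{\theta}_t = \arg\min_\theta \big(\frac{\lambda}{2}\|\theta\|_2^2 + \sum_{s=1}^{t} \ell_s(\theta)\big)$ be the ridge regression estimator (with $\hat{\theta}_0 = 0$). Then for any $\theta^* \in \mathbb{R}^d$, $\sum_{t=1}^n \big(\ell_t(\hat{\theta}_{t-1}) - \ell_t(\theta^*)\big) = \frac{\lambda}{2}\|\theta^*\|_2^2 + \sum_{t=1}^n \ell_t(\hat{\theta}_{t-1}) \|A_t\|_{V_t^{-1}}^2 - \frac{1}{2}\|\hat{\theta}_n - \theta^*\|_{V_n}^2$. -/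

import Mathlib

open Matrix

private lemma vmv_mulVec {d : ℕ} (w v z : Fin d → ℝ) :
    (vecMulVec w v) *ᵥ z = (v ⬝ᵥ z) • w := by
  ext i
  simp only [mulVec, vecMulVec, dotProduct, Pi.smul_apply, smul_eq_mul, of_apply,
    Finset.sum_mul]
  exact Finset.sum_congr rfl fun j _ => by ring

private lemma icc_range {M : Type*} [AddCommMonoid M] (n : ℕ) (f : ℕ → M) :
    ∑ t ∈ Finset.Icc 1 n, f t = ∑ i ∈ Finset.range n, f (i + 1) := by
  induction n with
  | zero => simp
  | succ k ih => rw [Finset.sum_Icc_succ_top (by omega), ih, Finset.sum_range_succ]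

private lemma sum_mulVec' {d : ℕ} (s : Finset ℕ) (M : ℕ → Matrix (Fin d) (Fin d) ℝ)
    (z : Fin d → ℝ) : (∑ i ∈ s, M i) *ᵥ z = ∑ i ∈ s, M i *ᵥ z := by
  ext j
  simp only [mulVec, dotProduct, Matrix.sum_apply, Finset.sum_apply, Finset.sum_mul]
  rw [Finset.sum_comm]

private lemma dotProduct_sum' {d : ℕ} (s : Finset ℕ) (x : Fin d → ℝ) (f : ℕ → Fin d → ℝ) :
    x ⬝ᵥ (∑ i ∈ s, f i) = ∑ i ∈ s, x ⬝ᵥ f i := by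
  simp only [dotProduct, Finset.sum_apply, Finset.mul_sum]
  rw [Finset.sum_comm]

theorem stmt_11 (d n : ℕ) (lam : ℝ) (hlam : 0 < lam)
    (A : ℕ → (Fin d → ℝ)) (y : ℕ → ℝ)
    (ell : ℕ → (Fin d → ℝ) → ℝ)
    (hell : ∀ t θ, ell t θ = (1 / 2) * (A t ⬝ᵥ θ - y t) ^ 2)
    (V : ℕ → Matrix (Fin d) (Fin d) ℝ)
    (hV : ∀ t, V t = lam • (1 : Matrix (Fin d) (Fin d) ℝ)
      + ∑ s ∈ Finset.Icc 1 t, vecMulVec (A s) (A s))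
    (θhat : ℕ → (Fin d → ℝ)) (hθ0 : θhat 0 = 0)
    (hmin : ∀ t θ,
      (lam / 2) * (θhat t ⬝ᵥ θhat t) + ∑ s ∈ Finset.Icc 1 t, ell s (θhat t)
        ≤ (lam / 2) * (θ ⬝ᵥ θ) + ∑ s ∈ Finset.Icc 1 t, ell s θ)
    (θstar : Fin d → ℝ) :
    ∑ t ∈ Finset.Icc 1 n, (ell t (θhat (t - 1)) - ell t θstar) =
      (lam / 2) * (θstar ⬝ᵥ θstar)
        + ∑ t ∈ Finset.Icc 1 n, ell t (θhat (t - 1)) * (A t ⬝ᵥ ((V t)⁻¹ *ᵥ A t))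
        - (1 / 2) * ((θhat n - θstar) ⬝ᵥ (V n *ᵥ (θhat n - θstar))) := by
  classical
  set F : ℕ → (Fin d → ℝ) → ℝ :=
    fun t θ => (lam / 2) * (θ ⬝ᵥ θ) + ∑ s ∈ Finset.Icc 1 t, ell s θ with hF
  set bv : ℕ → (Fin d → ℝ) := fun t => ∑ s ∈ Finset.Icc 1 t, y s • A s with hbv
  -- quadratic form of V
  have hquad : ∀ (t : ℕ) (x z : Fin d → ℝ), x ⬝ᵥ (V t *ᵥ z)
      = lam * (x ⬝ᵥ z) + ∑ s ∈ Finset.Icc 1 t, (A s ⬝ᵥ x) * (A s ⬝ᵥ z) := by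
    intro t x z
    rw [hV, add_mulVec, dotProduct_add, smul_mulVec, one_mulVec, dotProduct_smul,
      sum_mulVec', dotProduct_sum']
    congr 1
    refine Finset.sum_congr rfl fun s _ => ?_
    rw [vmv_mulVec, dotProduct_smul, smul_eq_mul, dotProduct_comm x (A s)]
    ring
  -- dot with bv
  have hbvdot : ∀ (t : ℕ) (h : Fin d → ℝ), bv t ⬝ᵥ h = ∑ s ∈ Finset.Icc 1 t, y s * (A s ⬝ᵥ h) := by
    intro t h
    rw [hbv, dotProduct_comm, dotProduct_sum']
    exact Finset.sum_congr rfl fun s _ => by rw [dotProduct_smul, smul_eq_mul, dotProduct_comm]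
  -- expansion of F
  have hexp : ∀ (t : ℕ) (x h : Fin d → ℝ),
      F t (x + h) = F t x + (h ⬝ᵥ (V t *ᵥ x) - bv t ⬝ᵥ h)
        + (1 / 2) * (h ⬝ᵥ (V t *ᵥ h)) := by
    intro t x h
    simp only [hF, hell, hquad, hbvdot]
    rw [dotProduct_add, add_dotProduct, add_dotProduct, dotProduct_comm h x]
    have : ∀ s, A s ⬝ᵥ (x + h) = A s ⬝ᵥ x + A s ⬝ᵥ h := fun s => dotProduct_add _ _ _
    simp only [this]
    have hsum : ∑ s ∈ Finset.Icc 1 t, (1 / 2) * (A s ⬝ᵥ x + A s ⬝ᵥ h - y s) ^ 2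
        = (∑ s ∈ Finset.Icc 1 t, (1 / 2) * (A s ⬝ᵥ x - y s) ^ 2)
          + ((∑ s ∈ Finset.Icc 1 t, (A s ⬝ᵥ h) * (A s ⬝ᵥ x))
              - ∑ s ∈ Finset.Icc 1 t, y s * (A s ⬝ᵥ h))
          + (1 / 2) * ∑ s ∈ Finset.Icc 1 t, (A s ⬝ᵥ h) * (A s ⬝ᵥ h) := by
      rw [Finset.mul_sum, ← Finset.sum_sub_distrib, ← Finset.sum_add_distrib,
        ← Finset.sum_add_distrib]
      exact Finset.sum_congr rfl fun s _ => by ring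
    rw [hsum]
    ring
  -- stationarity
  have hstat : ∀ t, V t *ᵥ θhat t = bv t := by
    intro t
    set g : Fin d → ℝ := V t *ᵥ θhat t - bv t with hg
    suffices hgz : g = 0 by
      have := hg ▸ hgz
      exact sub_eq_zero.mp this
    rw [← dotProduct_self_eq_zero (v := g)]
    set a : ℝ := g ⬝ᵥ g with ha
    set c : ℝ := g ⬝ᵥ (V t *ᵥ g) with hc
    have hkey : ∀ ε : ℝ, 0 < ε → 0 ≤ -(ε * a) + ε ^ 2 / 2 * c := by
      intro ε hε
      have h1 := hmin t (θhat t + (-ε) • g)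
      have h2 := hexp t (θhat t) ((-ε) • g)
      have e3 : g ⬝ᵥ (V t *ᵥ θhat t) - bv t ⬝ᵥ g = a := by
        rw [ha, dotProduct_comm (bv t) g, ← dotProduct_sub, ← hg]
      have hlin : ((-ε) • g) ⬝ᵥ (V t *ᵥ θhat t) - bv t ⬝ᵥ ((-ε) • g) = -(ε * a) := by
        rw [smul_dotProduct, dotProduct_smul, smul_eq_mul, smul_eq_mul]
        linear_combination (-ε) * e3
      have hquadterm : ((-ε) • g) ⬝ᵥ (V t *ᵥ ((-ε) • g)) = ε ^ 2 * c := by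
        rw [mulVec_smul, smul_dotProduct, dotProduct_smul, hc]
        simp only [smul_eq_mul]
        ring
      rw [hlin, hquadterm] at h2
      have : F t (θhat t) ≤ F t (θhat t + (-ε) • g) := h1
      rw [h2] at this
      linarith
    have ha0 : 0 ≤ a := Finset.sum_nonneg fun i _ => mul_self_nonneg _
    by_contra hane
    have hapos : 0 < a := lt_of_le_of_ne ha0 (Ne.symm hane)
    have h1 := hkey 1 one_pos
    have hcpos : 0 < c := by nlinarith
    have h2 := hkey (a / c) (div_pos hapos hcpos)
    have : -(a / c * a) + (a / c) ^ 2 / 2 * c = -(a ^ 2 / c) / 2 := by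
      field_simp
      ring
    rw [this] at h2
    nlinarith [sq_nonneg a, div_pos (by positivity : (0:ℝ) < a ^ 2) hcpos]
  -- exact curvature at minimizer
  have hdiff : ∀ (t : ℕ) (θ : Fin d → ℝ),
      F t θ = F t (θhat t) + (1 / 2) * ((θ - θhat t) ⬝ᵥ (V t *ᵥ (θ - θhat t))) := by
    intro t θ
    have h2 := hexp t (θhat t) (θ - θhat t)
    rw [add_sub_cancel] at h2
    rw [h2, hstat t, dotProduct_comm (bv t)]
    ring
  -- invertibility of V t
  have hinv : ∀ (t : ℕ) (x : Fin d → ℝ), (V t)⁻¹ *ᵥ (V t *ᵥ x) = x := by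
    intro t x
    have hpd : (V t).PosDef := by
      refine Matrix.PosDef.of_dotProduct_mulVec_pos ?_ ?_
      · show (V t)ᴴ = V t
        rw [Matrix.conjTranspose_eq_transpose_of_trivial, hV, transpose_add, transpose_smul,
          transpose_one, Matrix.transpose_sum]
        congr 1
        refine Finset.sum_congr rfl fun s _ => ?_
        ext i j
        simp [vecMulVec, mul_comm]
      · intro x hx
        have : star x ⬝ᵥ (V t *ᵥ x) = x ⬝ᵥ (V t *ᵥ x) := by simp
        rw [this, hquad]
        have h1 : 0 < x ⬝ᵥ x := by
          rcases lt_or_eq_of_le (Finset.sum_nonneg fun i _ => mul_self_nonneg (x i)) with h | h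
          · exact h
          · exact absurd (dotProduct_self_eq_zero.mp h.symm) hx
        have h2 : 0 ≤ ∑ s ∈ Finset.Icc 1 t, (A s ⬝ᵥ x) * (A s ⬝ᵥ x) :=
          Finset.sum_nonneg fun s _ => mul_self_nonneg _
        nlinarith
    have hu : IsUnit (V t).det := Matrix.isUnit_iff_isUnit_det _ |>.mp hpd.isUnit
    rw [mulVec_mulVec, Matrix.nonsing_inv_mul _ hu, one_mulVec]
  -- the per-step identity
  have hstep : ∀ i : ℕ, F (i + 1) (θhat (i + 1))
      = F i (θhat i) + ell (i + 1) (θhat i)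
        - ell (i + 1) (θhat i) * (A (i + 1) ⬝ᵥ ((V (i + 1))⁻¹ *ᵥ A (i + 1))) := by
    intro i
    set r : ℝ := A (i + 1) ⬝ᵥ θhat i - y (i + 1) with hr
    set dd : Fin d → ℝ := θhat i - θhat (i + 1) with hd
    have hVd : V (i + 1) *ᵥ dd = r • A (i + 1) := by
      rw [hd, mulVec_sub, hstat (i + 1)]
      have hVsplit : V (i + 1) = V i + vecMulVec (A (i + 1)) (A (i + 1)) := by
        rw [hV, hV, Finset.sum_Icc_succ_top (by omega : 1 ≤ i + 1)]
        rw [add_assoc]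
      have hbsplit : bv (i + 1) = bv i + y (i + 1) • A (i + 1) := by
        rw [hbv]
        exact Finset.sum_Icc_succ_top (by omega : 1 ≤ i + 1) _
      rw [hVsplit, add_mulVec, hstat i, vmv_mulVec, hbsplit, hr]
      ext j
      simp only [Pi.add_apply, Pi.sub_apply, Pi.smul_apply, smul_eq_mul]
      ring
    have hdval : dd = r • ((V (i + 1))⁻¹ *ᵥ A (i + 1)) := by
      have := congrArg (fun v => (V (i + 1))⁻¹ *ᵥ v) hVd
      rw [hinv (i + 1) dd] at this
      rw [this, mulVec_smul]
    have hquadval : dd ⬝ᵥ (V (i + 1) *ᵥ dd)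
        = r ^ 2 * (A (i + 1) ⬝ᵥ ((V (i + 1))⁻¹ *ᵥ A (i + 1))) := by
      rw [hVd, dotProduct_smul, hdval, smul_dotProduct]
      rw [smul_eq_mul, smul_eq_mul, dotProduct_comm ((V (i+1))⁻¹ *ᵥ A (i+1)) (A (i+1))]
      ring
    have hF1 : F (i + 1) (θhat i) = F i (θhat i) + ell (i + 1) (θhat i) := by
      simp only [hF]
      rw [Finset.sum_Icc_succ_top (by omega : 1 ≤ i + 1)]
      ring
    have hF2 : F (i + 1) (θhat i)
        = F (i + 1) (θhat (i + 1)) + (1 / 2) * (dd ⬝ᵥ (V (i + 1) *ᵥ dd)) := by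
      rw [hdiff (i + 1) (θhat i)]
    rw [hquadval] at hF2
    have hellval : ell (i + 1) (θhat i) = (1 / 2) * r ^ 2 := by rw [hell, hr]
    rw [hF1] at hF2
    rw [hellval]
    linarith [hF2]
  -- telescoping
  have hF0 : F 0 (θhat 0) = 0 := by
    simp [hF, hθ0]
  have htel : F n (θhat n) = ∑ i ∈ Finset.range n,
      (ell (i + 1) (θhat i)
        - ell (i + 1) (θhat i) * (A (i + 1) ⬝ᵥ ((V (i + 1))⁻¹ *ᵥ A (i + 1)))) := by
    have := Finset.sum_range_sub (fun t => F t (θhat t)) n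
    rw [hF0, sub_zero] at this
    rw [← this]
    refine Finset.sum_congr rfl fun i _ => ?_
    rw [hstep i]
    ring
  -- final assembly
  have hfin : F n θstar = F n (θhat n)
      + (1 / 2) * ((θhat n - θstar) ⬝ᵥ (V n *ᵥ (θhat n - θstar))) := by
    rw [hdiff n θstar]
    congr 1
    congr 1
    have hneg : θstar - θhat n = -(θhat n - θstar) := by ring
    rw [hneg, mulVec_neg, dotProduct_neg, neg_dotProduct, neg_neg]
  -- rewrite all Icc sums as range sums
  rw [icc_range n (fun t => ell t (θhat (t - 1)) - ell t θstar),
    icc_range n (fun t => ell t (θhat (t - 1)) * (A t ⬝ᵥ ((V t)⁻¹ *ᵥ A t)))]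
  simp only [Nat.add_sub_cancel]
  have hFstar : F n θstar = (lam / 2) * (θstar ⬝ᵥ θstar)
      + ∑ i ∈ Finset.range n, ell (i + 1) θstar := by
    simp only [hF]
    rw [icc_range n (fun s => ell s θstar)]
  rw [htel, hFstar, Finset.sum_sub_distrib] at hfin
  rw [Finset.sum_sub_distrib]
  linarith [hfin]
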